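/- Let ζ ∈ ℝ with m_k ≠ −ζ and m̄_k ≠ ζ for all k, assume 1 + A·Ā is invertible, and assume E_{ζζ} ≠ 0. Then 1 + A·H_ζ·Ā·H̄_ζ is invertible and (1 + A·H_ζ·Ā·H̄_ζ)⁻¹ = G − (2ζ/E_{ζζ})·G·|γ̄_ζ⟩⟨b_ζ|·G. -/

import Mathlib

open Matrix

noncomputable section

/-- `H_ζ = (M - ζ)(M + ζ)⁻¹` for `M = diag(m)`. -/
def Hmat {N : ℕ} (m : Fin N → ℝ) (ζ : ℝ) : Matrix (Fin N) (Fin N) ℝ :=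
  (Matrix.diagonal m - ζ • 1) * (Matrix.diagonal m + ζ • 1)⁻¹

/-- `H̄_ζ = (M̄ + ζ)(M̄ - ζ)⁻¹` for `M̄ = diag(m̄)`. -/
def Hbmat {N : ℕ} (mb : Fin N → ℝ) (ζ : ℝ) : Matrix (Fin N) (Fin N) ℝ :=
  (Matrix.diagonal mb + ζ • 1) * (Matrix.diagonal mb - ζ • 1)⁻¹

/-- The row `⟨b_ξ| = ⟨ā|(M̄ - ξ)⁻¹`. -/
def rowB {N : ℕ} (mb ab : Fin N → ℝ) (ξ : ℝ) : Fin N → ℝ :=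
  Matrix.vecMul ab (Matrix.diagonal mb - ξ • 1)⁻¹

/-- The column `|β̄_η⟩ = (M + η)⁻¹|ᾱ⟩`. -/
def colBb {N : ℕ} (m αb : Fin N → ℝ) (η : ℝ) : Fin N → ℝ :=
  Matrix.mulVec (Matrix.diagonal m + η • 1)⁻¹ αb

/-- The scalar `E_{ξη} = 1 + (ξ+η)·⟨b_ξ|·G·A·|β̄_η⟩` with `G = (1 + A·Ā)⁻¹`. -/
def Efun {N : ℕ} (m mb αb ab : Fin N → ℝ) (A Ab : Matrix (Fin N) (Fin N) ℝ)
    (ξ η : ℝ) : ℝ :=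
  1 + (ξ + η) *
    (rowB mb ab ξ ⬝ᵥ
      Matrix.mulVec (((1 : Matrix (Fin N) (Fin N) ℝ) + A * Ab)⁻¹ * A) (colBb m αb η))

lemma myvmv_mul {N : ℕ} (u v : Fin N → ℝ) (B : Matrix (Fin N) (Fin N) ℝ) :
    vecMulVec u v * B = vecMulVec u (vecMul v B) := by
  ext i j
  simp [mul_apply, vecMulVec_apply, vecMul, dotProduct, Finset.sum_mul, Finset.mul_sum, mul_assoc]

lemma mul_myvmv {N : ℕ} (u v : Fin N → ℝ) (B : Matrix (Fin N) (Fin N) ℝ) :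
    B * vecMulVec u v = vecMulVec (B.mulVec u) v := by
  ext i j
  simp [mul_apply, vecMulVec_apply, mulVec, dotProduct, Finset.sum_mul, Finset.mul_sum, mul_assoc]

lemma myvmv_mul_myvmv {N : ℕ} (u v u' v' : Fin N → ℝ) :
    vecMulVec u v * vecMulVec u' v' = (v ⬝ᵥ u') • vecMulVec u v' := by
  ext i j
  simp [mul_apply, vecMulVec_apply, dotProduct, Finset.mul_sum, Finset.sum_mul]
  ring_nf
  congr 1; ext k; ring

lemma diag_smul_one {N : ℕ} (ζ : ℝ) :
    (ζ • 1 : Matrix (Fin N) (Fin N) ℝ) = diagonal (fun _ => ζ) := by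
  ext i j
  by_cases h : i = j <;> simp [Matrix.one_apply, Matrix.diagonal_apply, h]

theorem shifted_G_inverse_formula
    {N : ℕ} (hN : 1 ≤ N) (m mb : Fin N → ℝ)
    (αv αb av ab : Fin N → ℝ)
    (A Ab : Matrix (Fin N) (Fin N) ℝ)
    (hA : Matrix.diagonal mb * A - A * Matrix.diagonal m = Matrix.vecMulVec αv av)
    (hAb : Matrix.diagonal m * Ab - Ab * Matrix.diagonal mb = Matrix.vecMulVec αb ab)
    (ζ : ℝ) (hm : ∀ k, m k ≠ -ζ) (hmb : ∀ k, mb k ≠ ζ)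
    (hG : IsUnit ((1 : Matrix (Fin N) (Fin N) ℝ) + A * Ab))
    (hE : Efun m mb αb ab A Ab ζ ζ ≠ 0) :
    IsUnit ((1 : Matrix (Fin N) (Fin N) ℝ) + A * Hmat m ζ * Ab * Hbmat mb ζ) ∧
    ((1 : Matrix (Fin N) (Fin N) ℝ) + A * Hmat m ζ * Ab * Hbmat mb ζ)⁻¹ =
      ((1 : Matrix (Fin N) (Fin N) ℝ) + A * Ab)⁻¹ -
        (2 * ζ / Efun m mb αb ab A Ab ζ ζ) •
          (((1 : Matrix (Fin N) (Fin N) ℝ) + A * Ab)⁻¹ *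
            Matrix.vecMulVec (Matrix.mulVec A (colBb m αb ζ)) (rowB mb ab ζ) *
            ((1 : Matrix (Fin N) (Fin N) ℝ) + A * Ab)⁻¹) := by
  -- diagonal shifts
  set d1 : Fin N → ℝ := fun k => m k + ζ with hd1def
  set d2 : Fin N → ℝ := fun k => mb k - ζ with hd2def
  have e1 : (diagonal m + ζ • 1 : Matrix (Fin N) (Fin N) ℝ) = diagonal d1 := by
    rw [diag_smul_one, diagonal_add]
  have e2 : (diagonal mb - ζ • 1 : Matrix (Fin N) (Fin N) ℝ) = diagonal d2 := by
    rw [diag_smul_one, diagonal_sub]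
  have hu1d : IsUnit (diagonal d1).det := by
    rw [det_diagonal]
    refine isUnit_iff_ne_zero.mpr (Finset.prod_ne_zero_iff.mpr fun k _ => ?_)
    intro h; exact hm k (by simp [hd1def] at h ⊢; linarith)
  have hu2d : IsUnit (diagonal d2).det := by
    rw [det_diagonal]
    refine isUnit_iff_ne_zero.mpr (Finset.prod_ne_zero_iff.mpr fun k _ => ?_)
    intro h; exact hmb k (by simp [hd2def] at h ⊢; linarith)
  have hinv1 : (diagonal d1)⁻¹ * diagonal d1 = 1 := Matrix.nonsing_inv_mul _ hu1d
  have hinv1' : diagonal d1 * (diagonal d1)⁻¹ = 1 := Matrix.mul_nonsing_inv _ hu1d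
  have hinv2 : (diagonal d2)⁻¹ * diagonal d2 = 1 := Matrix.nonsing_inv_mul _ hu2d
  have hinv2' : diagonal d2 * (diagonal d2)⁻¹ = 1 := Matrix.mul_nonsing_inv _ hu2d
  -- commutation of diagonal with inverse diagonal
  have comm1 : (diagonal m - ζ • 1) * (diagonal d1)⁻¹ = (diagonal d1)⁻¹ * (diagonal m - ζ • 1) := by
    rw [diag_smul_one, diagonal_sub, Matrix.inv_diagonal, diagonal_mul_diagonal,
      diagonal_mul_diagonal]
    exact congrArg _ (mul_comm _ _)
  -- core Sylvester computation
  have core : (diagonal m - ζ • 1) * Ab * (diagonal mb + ζ • 1) =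
      diagonal d1 * Ab * diagonal d2 + (2 * ζ) • vecMulVec αb ab := by
    rw [← hAb, ← e1, ← e2]
    simp only [sub_mul, mul_sub, add_mul, mul_add, smul_mul_assoc, mul_smul_comm,
      one_mul, mul_one, smul_sub, smul_smul]
    module
  -- the key identity
  have key : Hmat m ζ * Ab * Hbmat mb ζ =
      Ab + (2 * ζ) • vecMulVec (colBb m αb ζ) (rowB mb ab ζ) := by
    unfold Hmat Hbmat colBb rowB
    rw [e1, e2, comm1]
    calc (diagonal d1)⁻¹ * (diagonal m - ζ • 1) * Ab * ((diagonal mb + ζ • 1) * (diagonal d2)⁻¹)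
        = (diagonal d1)⁻¹ * ((diagonal m - ζ • 1) * Ab * (diagonal mb + ζ • 1)) * (diagonal d2)⁻¹ := by
          noncomm_ring
      _ = (diagonal d1)⁻¹ * (diagonal d1 * Ab * diagonal d2 + (2 * ζ) • vecMulVec αb ab) * (diagonal d2)⁻¹ := by
          rw [core]
      _ = ((diagonal d1)⁻¹ * diagonal d1) * Ab * (diagonal d2 * (diagonal d2)⁻¹)
          + (2 * ζ) • ((diagonal d1)⁻¹ * vecMulVec αb ab * (diagonal d2)⁻¹) := by
          simp only [mul_add, add_mul, mul_smul_comm, smul_mul_assoc]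
          noncomm_ring
      _ = Ab + (2 * ζ) • vecMulVec (Matrix.mulVec (diagonal d1)⁻¹ αb) (Matrix.vecMul ab (diagonal d2)⁻¹) := by
          rw [hinv1, hinv2', one_mul, mul_one, mul_myvmv, myvmv_mul]
  -- notation for the Sherman–Morrison step
  set G : Matrix (Fin N) (Fin N) ℝ := (1 + A * Ab)⁻¹ with hGdef
  set u : Fin N → ℝ := Matrix.mulVec A (colBb m αb ζ) with hudef
  set v : Fin N → ℝ := rowB mb ab ζ with hvdef
  set U : Matrix (Fin N) (Fin N) ℝ := vecMulVec u v with hUdef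
  set s : ℝ := 2 * ζ with hsdef
  set t : ℝ := v ⬝ᵥ Matrix.mulVec G u with htdef
  have hGd := (Matrix.isUnit_iff_isUnit_det _).mp hG
  have hGl : (1 + A * Ab) * G = 1 := Matrix.mul_nonsing_inv _ hGd
  have hGr : G * (1 + A * Ab) = 1 := Matrix.nonsing_inv_mul _ hGd
  have hEt : Efun m mb αb ab A Ab ζ ζ = 1 + s * t := by
    unfold Efun
    rw [← Matrix.mulVec_mulVec]
    rw [htdef, hudef, hvdef, hsdef, hGdef]
    ring_nf
  have hS : (1 : Matrix (Fin N) (Fin N) ℝ) + A * Hmat m ζ * Ab * Hbmat mb ζ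
      = (1 + A * Ab) + s • U := by
    rw [mul_assoc, mul_assoc, ← mul_assoc (Hmat m ζ), key, mul_add, mul_smul_comm, mul_myvmv]
    rw [hUdef, hudef, hvdef, hsdef]
    abel
  have hE' : 1 + s * t ≠ 0 := by rw [← hEt]; exact hE
  set c : ℝ := s / (1 + s * t) with hcdef
  have hcE : c * (1 + s * t) = s := div_mul_cancel₀ _ hE'
  set C : Matrix (Fin N) (Fin N) ℝ := G - c • (G * U * G) with hCdef
  -- the one-sided inverse computation
  have h1 : (1 + A * Ab) * (G * U * G) = U * G := by
    rw [← mul_assoc, ← mul_assoc, hGl, one_mul]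
  have hUGU : U * G * U = t • U := by
    rw [hUdef, myvmv_mul, myvmv_mul_myvmv, ← Matrix.dotProduct_mulVec]
  have h2 : U * (G * U * G) = t • (U * G) := by
    rw [← mul_assoc, ← mul_assoc, hUGU, smul_mul_assoc]
  have hone : ((1 + A * Ab) + s • U) * C = 1 := by
    have expand : ((1 + A * Ab) + s • U) * C = 1 + (s - c * (1 + s * t)) • (U * G) := by
      rw [hCdef]
      simp only [add_mul, mul_sub, smul_mul_assoc, mul_smul_comm, h1, h2, hGl, smul_smul]
      module
    rw [expand, hcE, sub_self, zero_smul, add_zero]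
  rw [hS]
  refine ⟨?_, ?_⟩
  · exact (Matrix.isUnit_iff_isUnit_det _).mpr (Matrix.isUnit_det_of_right_inverse hone)
  · rw [Matrix.inv_eq_right_inv hone, hCdef, hEt]
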